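/- For every complex λ = τ + iν with τ ≠ 0 and every real a, one has |λ / (λ² + a²)| ≤ 1/|τ|. Equivalently, √(τ² + ν²) / (√(τ² + (ν + a)²)·√(τ² + (ν − a)²)) ≤ 1/|τ|. -/

import Mathlib

lemma real_ineq (τ ν a : ℝ) (hτ : τ ≠ 0) :
    Real.sqrt (τ ^ 2 + ν ^ 2) /
        (Real.sqrt (τ ^ 2 + (ν + a) ^ 2) * Real.sqrt (τ ^ 2 + (ν - a) ^ 2))
      ≤ 1 / |τ| := by
  have hτ2 : 0 < τ ^ 2 := by positivity
  have h1 : 0 < Real.sqrt (τ ^ 2 + (ν + a) ^ 2) := Real.sqrt_pos.mpr (by nlinarith [sq_nonneg (ν + a)])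
  have h2 : 0 < Real.sqrt (τ ^ 2 + (ν - a) ^ 2) := Real.sqrt_pos.mpr (by nlinarith [sq_nonneg (ν - a)])
  have hτabs : 0 < |τ| := abs_pos.mpr hτ
  rw [div_le_div_iff₀ (by positivity) hτabs]
  have key : |τ| * Real.sqrt (τ ^ 2 + ν ^ 2) ≤
      Real.sqrt (τ ^ 2 + (ν + a) ^ 2) * Real.sqrt (τ ^ 2 + (ν - a) ^ 2) := by
    rw [← Real.sqrt_sq_eq_abs, ← Real.sqrt_mul (by positivity),
      ← Real.sqrt_mul (by positivity)]
    apply Real.sqrt_le_sqrt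
    nlinarith [sq_nonneg (ν * a), sq_nonneg (ν ^ 2 - a ^ 2), sq_nonneg (τ * ν), sq_nonneg (τ * a)]
  calc Real.sqrt (τ ^ 2 + ν ^ 2) * |τ| = |τ| * Real.sqrt (τ ^ 2 + ν ^ 2) := by ring
    _ ≤ _ := key
    _ = 1 * (Real.sqrt (τ ^ 2 + (ν + a) ^ 2) * Real.sqrt (τ ^ 2 + (ν - a) ^ 2)) := by ring

/-- Scalar version of Lemma 3: `|λ/(λ² + a²)| ≤ 1/|Re λ|`, equivalently
`√(τ² + ν²) / (√(τ² + (ν + a)²)·√(τ² + (ν − a)²)) ≤ 1/|τ|`. -/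
theorem stmt2 (lam : ℂ) (hτ : lam.re ≠ 0) (a : ℝ) :
    ‖lam / (lam ^ 2 + (a : ℂ) ^ 2)‖ ≤ 1 / |lam.re| ∧
    Real.sqrt (lam.re ^ 2 + lam.im ^ 2) /
        (Real.sqrt (lam.re ^ 2 + (lam.im + a) ^ 2) * Real.sqrt (lam.re ^ 2 + (lam.im - a) ^ 2))
      ≤ 1 / |lam.re| := by
  have hr := real_ineq lam.re lam.im a hτ
  refine ⟨?_, hr⟩
  have hfact : lam ^ 2 + (a : ℂ) ^ 2 = (lam + a * Complex.I) * (lam - a * Complex.I) := by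
    ring_nf
    simp [Complex.I_sq]
  have habs : ‖lam / (lam ^ 2 + (a : ℂ) ^ 2)‖ =
      Real.sqrt (lam.re ^ 2 + lam.im ^ 2) /
        (Real.sqrt (lam.re ^ 2 + (lam.im + a) ^ 2) * Real.sqrt (lam.re ^ 2 + (lam.im - a) ^ 2)) := by
    rw [norm_div, hfact, norm_mul]
    congr 1
    · rw [Complex.norm_def, Complex.normSq_apply]; ring_nf
    · congr 1
      · rw [Complex.norm_def, Complex.normSq_apply]; simp; ring_nf
      · rw [Complex.norm_def, Complex.normSq_apply]; simp; ring_nf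
  rw [habs]; exact hr
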